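/- If every pair of matrices in the support of a compactly supported probability measure μ on ℝ^{2×2} has det(X − Y) = 0 for all X, Y in the support, then the support of μ is contained in a 2-dimensional affine plane P such that rank(X − Y) ≤ 1 for all X, Y ∈ P, or the support is contained in a single rank-one line or point. -/

import Mathlib

open MeasureTheory Matrix

abbrev M2 := Matrix (Fin 2) (Fin 2) ℝ

noncomputable instance : MeasurableSpace M2 := borel M2

/-- The (topological) support of a measure: the points all of whose open neighbourhoods
have positive measure. -/


lemma fin2_ne_zero {x : Fin 2 → ℝ} (hx : x ≠ 0) : x 0 ≠ 0 ∨ x 1 ≠ 0 := by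
  by_contra h
  push_neg at h
  exact hx (funext fun i => by fin_cases i <;> simp [h.1, h.2])

lemma cross_zero {x y : Fin 2 → ℝ} (hx : x ≠ 0) (h : x 0 * y 1 - x 1 * y 0 = 0) :
    ∃ t : ℝ, y = t • x := by
  rcases fin2_ne_zero hx with h0 | h1
  · refine ⟨y 0 / x 0, funext fun i => ?_⟩
    fin_cases i
    · simp; field_simp
    · simp only [Pi.smul_apply, smul_eq_mul]
      field_simp
      simp only [Fin.mk_one, Fin.zero_eta, Fin.isValue]
      linear_combination h
  · refine ⟨y 1 / x 1, funext fun i => ?_⟩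
    fin_cases i
    · simp only [Pi.smul_apply, smul_eq_mul]
      field_simp
      simp only [Fin.mk_one, Fin.zero_eta, Fin.isValue]
      linear_combination -h
    · simp; field_simp

lemma rank_vmv_le (u v : Fin 2 → ℝ) : (vecMulVec u v).rank ≤ 1 := by
  rw [vecMulVec_eq Unit]
  exact le_trans (Matrix.rank_mul_le_left _ _)
    (le_trans (Matrix.rank_le_card_width _) (by simp))

lemma one_le_rank {B : M2} (hB : B ≠ 0) : 1 ≤ B.rank := by
  rw [Nat.one_le_iff_ne_zero]
  intro h0
  apply hB
  rw [Matrix.rank] at h0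
  have hbot : LinearMap.range B.mulVecLin = ⊥ := Submodule.finrank_eq_zero.mp h0
  rw [LinearMap.range_eq_bot] at hbot
  ext i j
  have := congrFun (LinearMap.congr_fun hbot (Pi.single j 1)) i
  simpa [Matrix.mulVecLin_apply, Matrix.mulVec_single] using this

lemma decomp {B : M2} (hd : B.det = 0) (hB : B ≠ 0) :
    ∃ u a : Fin 2 → ℝ, u ≠ 0 ∧ a ≠ 0 ∧ B = vecMulVec u a := by
  rw [Matrix.det_fin_two] at hd
  set c0 : Fin 2 → ℝ := fun i => B i 0 with hc0
  set c1 : Fin 2 → ℝ := fun i => B i 1 with hc1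
  by_cases h0 : c0 = 0
  · have h1 : c1 ≠ 0 := by
      intro h1
      apply hB
      ext i j
      fin_cases j
      · exact congrFun h0 i
      · exact congrFun h1 i
    refine ⟨c1, ![0, 1], h1, by simp, ?_⟩
    ext i j
    fin_cases j
    · simpa [vecMulVec_apply] using congrFun h0 i
    · simp [vecMulVec_apply, hc1]
  · obtain ⟨t, ht⟩ : ∃ t : ℝ, c1 = t • c0 := by
      apply cross_zero h0
      simp only [hc0, hc1]
      linear_combination hd
    refine ⟨c0, ![1, t], h0, by simp, ?_⟩
    ext i j
    fin_cases j
    · simp [vecMulVec_apply, hc0]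
    · simpa [vecMulVec_apply, mul_comm] using congrFun ht i

lemma key (u a c : Fin 2 → ℝ) (hu : u ≠ 0) (hac : a 0 * c 1 - a 1 * c 0 ≠ 0)
    (D : M2) (hD : D.det = 0)
    (h1 : (D - vecMulVec u a).det = 0) (h2 : (D - vecMulVec u c).det = 0) :
    ∃ w, D = vecMulVec u w := by
  simp only [Matrix.det_fin_two, Matrix.sub_apply, Matrix.vecMulVec_apply] at hD h1 h2
  have e1 : a 1 * (u 1 * D 0 0 - u 0 * D 1 0) - a 0 * (u 1 * D 0 1 - u 0 * D 1 1) = 0 := by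
    linear_combination hD - h1
  have e2 : c 1 * (u 1 * D 0 0 - u 0 * D 1 0) - c 0 * (u 1 * D 0 1 - u 0 * D 1 1) = 0 := by
    linear_combination hD - h2
  have hp : u 1 * D 0 0 - u 0 * D 1 0 = 0 := by
    have h3 : (a 0 * c 1 - a 1 * c 0) * (u 1 * D 0 0 - u 0 * D 1 0) = 0 := by
      linear_combination a 0 * e2 - c 0 * e1
    rcases mul_eq_zero.mp h3 with h | h
    · exact absurd h hac
    · exact h
  have hq : u 1 * D 0 1 - u 0 * D 1 1 = 0 := by
    have h3 : (a 0 * c 1 - a 1 * c 0) * (u 1 * D 0 1 - u 0 * D 1 1) = 0 := by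
      linear_combination a 1 * e2 - c 1 * e1
    rcases mul_eq_zero.mp h3 with h | h
    · exact absurd h hac
    · exact h
  rcases fin2_ne_zero hu with h0 | h1
  · refine ⟨![D 0 0 / u 0, D 0 1 / u 0], ?_⟩
    ext i j
    fin_cases i <;> fin_cases j <;> simp [vecMulVec_apply] <;> field_simp
    · linear_combination -hp
    · linear_combination -hq
  · refine ⟨![D 1 0 / u 1, D 1 1 / u 1], ?_⟩
    ext i j
    fin_cases i <;> fin_cases j <;> simp [vecMulVec_apply] <;> field_simp
    · linear_combination hp
    · linear_combination hq

lemma vmv_transpose (u a : Fin 2 → ℝ) : (vecMulVec u a)ᵀ = vecMulVec a u := by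
  ext i j; simp [vecMulVec_apply, Matrix.transpose_apply, mul_comm]

lemma key' (a u v : Fin 2 → ℝ) (ha : a ≠ 0) (huv : u 0 * v 1 - u 1 * v 0 ≠ 0)
    (D : M2) (hD : D.det = 0)
    (h1 : (D - vecMulVec u a).det = 0) (h2 : (D - vecMulVec v a).det = 0) :
    ∃ w, D = vecMulVec w a := by
  obtain ⟨w, hw⟩ := key a u v ha huv Dᵀ (by rwa [Matrix.det_transpose])
    (by rw [← vmv_transpose, ← Matrix.transpose_sub, Matrix.det_transpose]; exact h1)
    (by rw [← vmv_transpose, ← Matrix.transpose_sub, Matrix.det_transpose]; exact h2)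
  refine ⟨w, ?_⟩
  have := congrArg Matrix.transpose hw
  rwa [Matrix.transpose_transpose, vmv_transpose] at this

noncomputable def fLin (u : Fin 2 → ℝ) : (Fin 2 → ℝ) →ₗ[ℝ] M2 where
  toFun w := vecMulVec u w
  map_add' x y := by ext i j; simp [vecMulVec_apply]; ring
  map_smul' t x := by ext i j; simp [vecMulVec_apply]; ring

noncomputable def gLin (a : Fin 2 → ℝ) : (Fin 2 → ℝ) →ₗ[ℝ] M2 where
  toFun w := vecMulVec w a
  map_add' x y := by ext i j; simp [vecMulVec_apply]; ring
  map_smul' t x := by ext i j; simp [vecMulVec_apply]; ring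

lemma fLin_inj {u : Fin 2 → ℝ} (hu : u ≠ 0) : Function.Injective (fLin u) := by
  rw [← LinearMap.ker_eq_bot]
  ext w
  simp only [LinearMap.mem_ker, Submodule.mem_bot]
  constructor
  · intro h
    obtain ⟨i, hi⟩ : ∃ i, u i ≠ 0 := by
      rcases fin2_ne_zero hu with h | h; exacts [⟨0, h⟩, ⟨1, h⟩]
    funext j
    have := congrFun (congrFun h i) j
    simp only [fLin, LinearMap.coe_mk, AddHom.coe_mk, vecMulVec_apply, Matrix.zero_apply] at this
    have := mul_eq_zero.mp this
    simp only [hi, false_or] at this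
    simpa using this
  · rintro rfl; simp only [map_zero]

lemma gLin_inj {a : Fin 2 → ℝ} (ha : a ≠ 0) : Function.Injective (gLin a) := by
  rw [← LinearMap.ker_eq_bot]
  ext w
  simp only [LinearMap.mem_ker, Submodule.mem_bot]
  constructor
  · intro h
    obtain ⟨j, hj⟩ : ∃ j, a j ≠ 0 := by
      rcases fin2_ne_zero ha with h | h; exacts [⟨0, h⟩, ⟨1, h⟩]
    funext i
    have := congrFun (congrFun h i) j
    simp only [gLin, LinearMap.coe_mk, AddHom.coe_mk, vecMulVec_apply, Matrix.zero_apply] at this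
    have := mul_eq_zero.mp this
    simp only [hj, or_false] at this
    simpa using this
  · rintro rfl; simp only [map_zero]

lemma finrank_fLin {u : Fin 2 → ℝ} (hu : u ≠ 0) :
    Module.finrank ℝ (LinearMap.range (fLin u)) = 2 := by
  rw [LinearMap.finrank_range_of_inj (fLin_inj hu)]
  simp

lemma finrank_gLin {a : Fin 2 → ℝ} (ha : a ≠ 0) :
    Module.finrank ℝ (LinearMap.range (gLin a)) = 2 := by
  rw [LinearMap.finrank_range_of_inj (gLin_inj ha)]
  simp

lemma plane_ok (X0 : M2) (V : Submodule ℝ M2)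
    (hV : ∀ Z ∈ V, ∃ u w : Fin 2 → ℝ, Z = vecMulVec u w) :
    ∀ X ∈ AffineSubspace.mk' X0 V, ∀ Y ∈ AffineSubspace.mk' X0 V, (X - Y).rank ≤ 1 := by
  intro X hX Y hY
  have hm : X - Y ∈ (AffineSubspace.mk' X0 V).direction := by
    have := AffineSubspace.vsub_mem_direction hX hY
    simpa [vsub_eq_sub] using this
  rw [AffineSubspace.direction_mk'] at hm
  obtain ⟨u, w, huw⟩ := hV _ hm
  rw [huw]
  exact rank_vmv_le u w

lemma vmv_smul_right (u b : Fin 2 → ℝ) (t : ℝ) :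
    vecMulVec u (t • b) = t • vecMulVec u b := by
  ext i j; simp [vecMulVec_apply]; ring

lemma vmv_smul_left (u b : Fin 2 → ℝ) (t : ℝ) :
    vecMulVec (t • u) b = t • vecMulVec u b := by
  ext i j; simp [vecMulVec_apply]; ring

lemma main_lemma (S : Set M2) (h : ∀ X ∈ S, ∀ Y ∈ S, (X - Y).det = 0) :
    (∃ P : AffineSubspace ℝ M2, Module.finrank ℝ P.direction = 2 ∧
        (∀ X ∈ P, ∀ Y ∈ P, (X - Y).rank ≤ 1) ∧ S ⊆ (P : Set M2)) ∨
      (∃ A B : M2, B.rank = 1 ∧ S ⊆ {X | ∃ t : ℝ, X = A + t • B}) ∨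
      S.Subsingleton := by
  by_cases hsub : S.Subsingleton
  · exact Or.inr (Or.inr hsub)
  rw [← Set.not_nontrivial_iff, not_not] at hsub
  obtain ⟨X0, hX0, X1, hX1, hne⟩ := hsub
  set B : M2 := X1 - X0 with hBdef
  have hB0 : B ≠ 0 := sub_ne_zero.mpr (Ne.symm hne)
  have hBdet : B.det = 0 := h X1 hX1 X0 hX0
  obtain ⟨u, a, hu, ha, hBe⟩ := decomp hBdet hB0
  by_cases hline : ∀ X ∈ S, ∃ t : ℝ, X = X0 + t • B
  · refine Or.inr (Or.inl ⟨X0, B, ?_, hline⟩)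
    refine le_antisymm ?_ (one_le_rank hB0)
    rw [hBe]; exact rank_vmv_le u a
  push_neg at hline
  obtain ⟨X2, hX2, hX2l⟩ := hline
  set C : M2 := X2 - X0 with hCdef
  have hC0 : C ≠ 0 := by
    intro hC
    exact hX2l 0 (by rw [zero_smul, add_zero]; exact (sub_eq_zero.mp hC))
  have hCdet : C.det = 0 := h X2 hX2 X0 hX0
  obtain ⟨v, b, hv, hb, hCe⟩ := decomp hCdet hC0
  have hCB : (C - B).det = 0 := by
    have : C - B = X2 - X1 := by rw [hCdef, hBdef]; abel
    rw [this]; exact h X2 hX2 X1 hX1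
  have cross : (u 0 * v 1 - u 1 * v 0) * (a 0 * b 1 - a 1 * b 0) = 0 := by
    rw [hCe, hBe] at hCB
    simp only [Matrix.det_fin_two, Matrix.sub_apply, Matrix.vecMulVec_apply] at hCB
    linear_combination -hCB
  have hXmem : ∀ X ∈ S, (X - X0).det = 0 ∧ ((X - X0) - B).det = 0 ∧ ((X - X0) - C).det = 0 := by
    intro X hX
    refine ⟨h X hX X0 hX0, ?_, ?_⟩
    · have : X - X0 - B = X - X1 := by rw [hBdef]; abel
      rw [this]; exact h X hX X1 hX1
    · have : X - X0 - C = X - X2 := by rw [hCdef]; abel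
      rw [this]; exact h X hX X2 hX2
  rcases mul_eq_zero.mp cross with huv | hab
  · -- common left vector u
    obtain ⟨t, htv⟩ := cross_zero hu huv
    have hCe' : C = vecMulVec u (t • b) := by
      rw [vmv_smul_right, ← vmv_smul_left, ← htv, hCe]
    set c : Fin 2 → ℝ := t • b with hc
    have hac : a 0 * c 1 - a 1 * c 0 ≠ 0 := by
      intro hz
      obtain ⟨s, hs⟩ : ∃ s : ℝ, c = s • a := cross_zero ha hz
      exact hX2l s (by
        rw [hBe, ← vmv_smul_right, ← hs, ← hCe', hCdef]; abel)
    refine Or.inl ⟨AffineSubspace.mk' X0 (LinearMap.range (fLin u)), ?_, ?_, ?_⟩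
    · rw [AffineSubspace.direction_mk']; exact finrank_fLin hu
    · exact plane_ok X0 _ (by rintro Z ⟨w, rfl⟩; exact ⟨u, w, rfl⟩)
    · intro X hX
      obtain ⟨hD, h1, h2⟩ := hXmem X hX
      rw [hBe] at h1; rw [hCe'] at h2
      obtain ⟨w, hw⟩ := key u a c hu hac (X - X0) hD h1 h2
      have : X ∈ AffineSubspace.mk' X0 (LinearMap.range (fLin u)) := by
        rw [AffineSubspace.mem_mk', vsub_eq_sub, hw]
        exact ⟨w, rfl⟩
      exact this
  · -- common right vector a
    obtain ⟨t, htb⟩ := cross_zero ha hab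
    have hCe' : C = vecMulVec (t • v) a := by
      rw [vmv_smul_left, ← vmv_smul_right, ← htb, hCe]
    set v' : Fin 2 → ℝ := t • v with hv'
    have huv' : u 0 * v' 1 - u 1 * v' 0 ≠ 0 := by
      intro hz
      obtain ⟨s, hs⟩ : ∃ s : ℝ, v' = s • u := cross_zero hu hz
      exact hX2l s (by
        rw [hBe, ← vmv_smul_left, ← hs, ← hCe', hCdef]; abel)
    refine Or.inl ⟨AffineSubspace.mk' X0 (LinearMap.range (gLin a)), ?_, ?_, ?_⟩
    · rw [AffineSubspace.direction_mk']; exact finrank_gLin ha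
    · exact plane_ok X0 _ (by rintro Z ⟨w, rfl⟩; exact ⟨w, a, rfl⟩)
    · intro X hX
      obtain ⟨hD, h1, h2⟩ := hXmem X hX
      rw [hBe] at h1; rw [hCe'] at h2
      obtain ⟨w, hw⟩ := key' a u v' ha huv' (X - X0) hD h1 h2
      have : X ∈ AffineSubspace.mk' X0 (LinearMap.range (gLin a)) := by
        rw [AffineSubspace.mem_mk', vsub_eq_sub, hw]
        exact ⟨w, rfl⟩
      exact this

def msupport (μ : Measure M2) : Set M2 :=
  {X | ∀ U : Set M2, IsOpen U → X ∈ U → 0 < μ U}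

/-- If all pairwise differences of points of the support of a compactly supported
probability measure `μ` on `ℝ^{2×2}` are singular, then the support lies in a
2-dimensional affine plane of rank-one directions, or in a single rank-one line,
or is a single point (or empty). -/
theorem stmt10 (μ : Measure M2) [IsProbabilityMeasure μ]
    (hcomp : IsCompact (msupport μ))
    (hdet : ∀ X ∈ msupport μ, ∀ Y ∈ msupport μ, (X - Y).det = 0) :
    (∃ P : AffineSubspace ℝ M2, Module.finrank ℝ P.direction = 2 ∧
        (∀ X ∈ P, ∀ Y ∈ P, (X - Y).rank ≤ 1) ∧ msupport μ ⊆ (P : Set M2)) ∨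
      (∃ A B : M2, B.rank = 1 ∧ msupport μ ⊆ {X | ∃ t : ℝ, X = A + t • B}) ∨
      (msupport μ).Subsingleton := by
  exact main_lemma _ hdet
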